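/- Let p be a prime, k a positive integer coprime to p, and D > 0. Let S = { x ∈ (1/k)·ℤ[1/p] : x ≠ 0 and δ({0, x}) ≤ D }, where each rational x is viewed as the diagonal point (x,x) ∈ ℝ × ℚ_p. Then S is a union of finitely many orbits of multiplication by p²: there is a finite set F ⊂ ℚ such that S = { p^{2n}·a : n ∈ ℤ, a ∈ F }. -/

import Mathlib

/-- The subring `ℤ[1/p]` of `ℚ`, i.e. the smallest subring of `ℚ` containing `1/p`;
its elements are exactly the rationals of the form `a / p ^ k` with `a ∈ ℤ`, `k ∈ ℕ`. -/
def ZOneOver (p : ℕ) : Subring ℚ := Subring.closure {((p : ℚ))⁻¹}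

/-- The diagonal embedding of `ℚ` into `ℝ × ℚ_p`. -/
noncomputable def diagQ (p : ℕ) [Fact p.Prime] (x : ℚ) : ℝ × ℚ_[p] :=
  ((x : ℝ), (x : ℚ_[p]))

/-- Coordinatewise multiplication by `p^(2n)` on `ℝ × ℚ_p`. -/
noncomputable def scaleH (p : ℕ) [Fact p.Prime] (n : ℤ) (z : ℝ × ℚ_[p]) : ℝ × ℚ_[p] :=
  ((p : ℝ) ^ (2 * n) * z.1, (p : ℚ_[p]) ^ (2 * n) * z.2)

/-- The `H`-invariant diameter `δ(S)`: the infimum over `n ∈ ℤ` of the diameter of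
`p^(2n) · S`, where `ℝ × ℚ_p` carries the sup metric
`d((x₁,y₁),(x₂,y₂)) = max (|x₁−x₂|) (|y₁−y₂|_p)`. -/
noncomputable def deltaH (p : ℕ) [Fact p.Prime] (S : Set (ℝ × ℚ_[p])) : ℝ :=
  ⨅ n : ℤ, Metric.diam (scaleH p n '' S)

section Aux

variable (p : ℕ) [hp : Fact p.Prime]

lemma hpR : (0:ℝ) < p := by exact_mod_cast hp.out.pos
lemma hpR1 : (1:ℝ) < p := by exact_mod_cast hp.out.one_lt
lemma hpQ : ((p:ℚ)) ≠ 0 := by exact_mod_cast hp.out.ne_zero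

/-- the max function whose infimum is `deltaH` of a pair `{0,x}`. -/
noncomputable def fpair (x : ℚ) (n : ℤ) : ℝ :=
  max ((p:ℝ)^(2*n) * |(x:ℝ)|) (((p:ℝ)^(2*n))⁻¹ * ‖(x:ℚ_[p])‖)

lemma fpair_nonneg (x : ℚ) (n : ℤ) : 0 ≤ fpair p x n :=
  le_trans (by positivity) (le_max_left _ _)

lemma delta_pair_eq (x : ℚ) :
    deltaH p (diagQ p '' {0, x}) = ⨅ n : ℤ, fpair p x n := by
  unfold deltaH
  congr 1; funext n
  rw [Set.image_pair, Set.image_pair, Metric.diam_pair]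
  have h0 : scaleH p n (diagQ p 0) = ((0:ℝ), (0:ℚ_[p])) := by
    simp [scaleH, diagQ]
  rw [h0, Prod.dist_eq]
  simp only [scaleH, diagQ]
  rw [dist_comm (0:ℝ), dist_comm (0:ℚ_[p]), dist_zero_right, dist_zero_right]
  unfold fpair
  congr 1
  · rw [norm_mul, Real.norm_eq_abs, Real.norm_eq_abs,
      abs_of_pos (zpow_pos (hpR p) _)]
  · rw [norm_mul, norm_zpow, Padic.norm_p, inv_zpow]

lemma fpair_shift (m : ℤ) (x : ℚ) (n : ℤ) :
    fpair p ((p:ℚ)^(2*m) * x) n = fpair p x (n + m) := by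
  unfold fpair
  push_cast
  have hne : (p:ℝ) ≠ 0 := (hpR p).ne'
  congr 1
  · rw [abs_mul, abs_of_pos (zpow_pos (hpR p) _), ← mul_assoc, ← zpow_add₀ hne]
    congr 2
    ring
  · rw [norm_mul, norm_zpow, Padic.norm_p, inv_zpow, ← mul_assoc,
      ← mul_inv, ← zpow_add₀ hne]
    congr 3
    ring

lemma ciInf_shift (g : ℤ → ℝ) (hb : BddBelow (Set.range g)) (m : ℤ) :
    ⨅ n : ℤ, g (n + m) = ⨅ n : ℤ, g n := by
  have hb' : BddBelow (Set.range fun n : ℤ => g (n + m)) := by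
    apply hb.mono
    rintro _ ⟨n, rfl⟩; exact ⟨n + m, rfl⟩
  apply le_antisymm
  · apply le_ciInf; intro n
    have := ciInf_le hb' (n - m)
    simpa using this
  · apply le_ciInf; intro n
    exact ciInf_le hb (n + m)

lemma delta_smul (m : ℤ) (x : ℚ) :
    deltaH p (diagQ p '' {0, (p:ℚ)^(2*m) * x}) = deltaH p (diagQ p '' {0, x}) := by
  rw [delta_pair_eq, delta_pair_eq]
  simp_rw [fpair_shift]
  exact ciInf_shift (fpair p x) ⟨0, by rintro _ ⟨n, rfl⟩; exact fpair_nonneg p x n⟩ m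

lemma abs_mul_norm_le {x : ℚ} {D : ℝ} (hD : 0 ≤ D)
    (h : deltaH p (diagQ p '' {0, x}) ≤ D) :
    |(x:ℝ)| * ‖(x:ℚ_[p])‖ ≤ D ^ 2 := by
  have key : Real.sqrt (|(x:ℝ)| * ‖(x:ℚ_[p])‖) ≤ deltaH p (diagQ p '' {0, x}) := by
    rw [delta_pair_eq]
    apply le_ciInf; intro n
    set A := (p:ℝ)^(2*n) * |(x:ℝ)| with hA
    set B := ((p:ℝ)^(2*n))⁻¹ * ‖(x:ℚ_[p])‖ with hB
    have hA0 : 0 ≤ A := by positivity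
    have hB0 : 0 ≤ B := by positivity
    have hpn : (p:ℝ)^(2*n) ≠ 0 := zpow_ne_zero _ (hpR p).ne'
    have hAB : |(x:ℝ)| * ‖(x:ℚ_[p])‖ = A * B := by
      rw [hA, hB]
      calc |(x:ℝ)| * ‖(x:ℚ_[p])‖
          = ((p:ℝ)^(2*n) * ((p:ℝ)^(2*n))⁻¹) * (|(x:ℝ)| * ‖(x:ℚ_[p])‖) := by
            rw [mul_inv_cancel₀ hpn, one_mul]
        _ = (p:ℝ)^(2*n) * |(x:ℝ)| * (((p:ℝ)^(2*n))⁻¹ * ‖(x:ℚ_[p])‖) := by ring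
    rw [hAB]
    have hmax : 0 ≤ max A B := le_trans hA0 (le_max_left _ _)
    show Real.sqrt (A * B) ≤ max A B
    rw [Real.sqrt_le_left hmax]
    calc A * B ≤ max A B * max A B :=
          mul_le_mul (le_max_left _ _) (le_max_right _ _) hB0 hmax
      _ = (max A B)^2 := (sq (max A B)).symm
  have := le_trans key h
  exact (Real.sqrt_le_left hD).mp this

lemma mem_ZOneOver_iff (q : ℚ) :
    q ∈ ZOneOver p ↔ ∃ (b : ℤ) (m : ℕ), q = (b:ℚ) / (p:ℚ)^m := by
  have hpe : ((p:ℚ)) ≠ 0 := hpQ p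
  constructor
  · intro hq
    let T : Subring ℚ :=
      { carrier := {q : ℚ | ∃ (b : ℤ) (m : ℕ), q = (b:ℚ) / (p:ℚ)^m}
        zero_mem' := ⟨0, 0, by norm_num⟩
        one_mem' := ⟨1, 0, by norm_num⟩
        add_mem' := by
          rintro a b ⟨c, m, rfl⟩ ⟨d, l, rfl⟩
          exact ⟨c * p^l + d * p^m, m + l, by push_cast [pow_add]; field_simp; try ring⟩
        neg_mem' := by
          rintro a ⟨c, m, rfl⟩
          exact ⟨-c, m, by push_cast; ring⟩
        mul_mem' := by
          rintro a b ⟨c, m, rfl⟩ ⟨d, l, rfl⟩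
          exact ⟨c * d, m + l, by push_cast [pow_add]; field_simp; try ring⟩ }
    have hle : ZOneOver p ≤ T := by
      apply Subring.closure_le.mpr
      intro y hy
      rcases hy with rfl
      exact ⟨1, 1, by push_cast; rw [pow_one, one_div]⟩
    exact hle hq
  · rintro ⟨b, m, rfl⟩
    have h1 : ((p:ℚ))⁻¹ ∈ ZOneOver p := Subring.subset_closure (Set.mem_singleton _)
    have h2 : ((p:ℚ)^m)⁻¹ ∈ ZOneOver p := by
      rw [← inv_pow]; exact pow_mem h1 m
    have h3 : ((b:ℚ)) ∈ ZOneOver p := intCast_mem _ b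
    rw [div_eq_mul_inv]
    exact mul_mem h3 h2

lemma zpow_mem_ZOneOver (m : ℤ) : (p:ℚ)^m ∈ ZOneOver p := by
  obtain ⟨a, rfl | rfl⟩ := Int.eq_nat_or_neg m
  · rw [zpow_natCast]; exact pow_mem (natCast_mem _ p) a
  · rw [zpow_neg, zpow_natCast, ← inv_pow]
    exact pow_mem (Subring.subset_closure (Set.mem_singleton _)) a

lemma padicValRat_p_zpow (m : ℤ) : padicValRat p ((p:ℚ)^m) = m := by
  obtain ⟨a, rfl | rfl⟩ := Int.eq_nat_or_neg m
  · rw [zpow_natCast, padicValRat.pow _,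
      padicValRat.self hp.out.one_lt, mul_one]
  · rw [zpow_neg, padicValRat.inv, zpow_natCast, padicValRat.pow _,
      padicValRat.self hp.out.one_lt, mul_one]

/-- An element of `ℤ[1/p]` with nonnegative `p`-adic valuation is an integer. -/
lemma int_of_mem_ZOneOver {q : ℚ} (hq : q ∈ ZOneOver p)
    (hv : 0 ≤ padicValRat p q) : ∃ c : ℤ, q = (c:ℚ) := by
  rcases eq_or_ne q 0 with rfl | hq0
  · exact ⟨0, by norm_num⟩
  obtain ⟨b, m, rfl⟩ := (mem_ZOneOver_iff p q).mp hq
  set q : ℚ := (b:ℚ) / (p:ℚ)^m with hqdef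
  have hden : (q.den : ℤ) ∣ (p:ℤ)^m := by
    have : q = Rat.divInt b ((p:ℤ)^m) := by
      rw [Rat.divInt_eq_div]; push_cast; rfl
    rw [this]
    exact Rat.den_dvd b _
  have hdenn : q.den ∣ p^m := by exact_mod_cast hden
  obtain ⟨j, hj, hjden⟩ := (Nat.dvd_prime_pow hp.out).mp hdenn
  rcases Nat.eq_zero_or_pos j with rfl | hj1
  · rw [pow_zero] at hjden
    exact ⟨q.num, ((Rat.den_eq_one_iff q).mp hjden).symm⟩
  · exfalso
    have hpden : padicValNat p q.den = j := by rw [hjden]; exact padicValNat.prime_pow j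
    have hpnum : padicValInt p q.num = 0 := by
      apply padicValInt.eq_zero_of_not_dvd
      intro hdvd
      have hpd : p ∣ q.den := hjden ▸ dvd_pow_self p hj1.ne'
      have hnum : p ∣ q.num.natAbs := Int.natCast_dvd.mp hdvd
      have hg : p ∣ Nat.gcd q.num.natAbs q.den := Nat.dvd_gcd hnum hpd
      have h1 : p ∣ 1 := q.reduced ▸ hg
      exact hp.out.ne_one (Nat.dvd_one.mp h1)
    have : padicValRat p q = (padicValInt p q.num : ℤ) - padicValNat p q.den := rfl
    rw [this, hpnum, hpden] at hv
    omega

end Aux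

section Aux2

variable (p : ℕ) [hp : Fact p.Prime]

lemma padicValRat_coprime_nat {k : ℕ} (hkp : Nat.Coprime k p) :
    padicValRat p (k:ℚ) = 0 := by
  have hnd : ¬ p ∣ k := by
    intro h
    exact hp.out.ne_one (Nat.dvd_one.mp (hkp ▸ Nat.dvd_gcd h dvd_rfl))
  have hcast : ((k:ℚ)) = ((k:ℤ):ℚ) := by push_cast; rfl
  rw [hcast, padicValRat.of_int]
  simp [padicValInt, padicValNat.eq_zero_of_not_dvd hnd]

lemma norm_ratCast_eq {x : ℚ} (hx : x ≠ 0) :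
    ‖(x:ℚ_[p])‖ = (p:ℝ) ^ (-padicValRat p x) := by
  rw [Padic.eq_padicNorm, padicNorm.eq_zpow_of_nonzero hx]
  push_cast
  norm_num

lemma S_invariant (k : ℕ) (D : ℝ) (m : ℤ) (x : ℚ)
    (h1 : (k:ℚ) * x ∈ ZOneOver p) (h2 : x ≠ 0)
    (h3 : deltaH p (diagQ p '' {0, x}) ≤ D) :
    (k:ℚ) * ((p:ℚ)^(2*m) * x) ∈ ZOneOver p ∧ (p:ℚ)^(2*m) * x ≠ 0 ∧
      deltaH p (diagQ p '' {0, (p:ℚ)^(2*m) * x}) ≤ D := by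
  refine ⟨?_, ?_, ?_⟩
  · have heq : (k:ℚ) * ((p:ℚ)^(2*m) * x) = (p:ℚ)^(2*m) * ((k:ℚ)*x) := by ring
    rw [heq]; exact mul_mem (zpow_mem_ZOneOver p _) h1
  · exact mul_ne_zero (zpow_ne_zero _ (hpQ p)) h2
  · rw [delta_smul]; exact h3

end Aux2

/-- For `k` coprime to `p` and `D > 0`, the set
`S = { x ∈ (1/k)·ℤ[1/p] : x ≠ 0, δ({0,x}) ≤ D }` is a union of finitely many orbits
of multiplication by `p²`. -/
theorem bounded_delta_set_is_finite_union_of_orbits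
    (p : ℕ) [Fact p.Prime] (k : ℕ) (hk : 0 < k) (hkp : Nat.Coprime k p)
    (D : ℝ) (hD : 0 < D) :
    ∃ F : Finset ℚ,
      {x : ℚ | (k : ℚ) * x ∈ ZOneOver p ∧ x ≠ 0 ∧ deltaH p (diagQ p '' {0, x}) ≤ D}
        = {x : ℚ | ∃ (n : ℤ) (a : ℚ), a ∈ F ∧ x = (p : ℚ) ^ (2 * n) * a} := by
  classical
  have hk0 : ((k:ℚ)) ≠ 0 := Nat.cast_ne_zero.mpr hk.ne'
  set B : ℤ := ⌈(k:ℝ) * p * D^2⌉ with hB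
  set T : Set ℚ := {a | ((k:ℚ) * a ∈ ZOneOver p ∧ a ≠ 0 ∧
      deltaH p (diagQ p '' {0, a}) ≤ D) ∧ ∃ c : ℤ, |c| ≤ B ∧ a = (c:ℚ)/(k:ℚ)} with hT
  have hTfin : T.Finite := by
    apply Set.Finite.subset ((Set.finite_Icc (-B) B).image (fun c : ℤ => (c:ℚ)/(k:ℚ)))
    rintro a ⟨-, c, hc, rfl⟩
    exact ⟨c, by rw [Set.mem_Icc]; exact ⟨(abs_le.mp hc).1, (abs_le.mp hc).2⟩, rfl⟩
  refine ⟨hTfin.toFinset, ?_⟩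
  ext x
  simp only [Set.mem_setOf_eq, Set.Finite.mem_toFinset]
  constructor
  · rintro ⟨h1, h2, h3⟩
    set v := padicValRat p x with hv
    set n := v / 2 with hn
    set a := (p:ℚ)^(2*(-n)) * x with ha
    have hxa : x = (p:ℚ)^(2*n) * a := by
      rw [ha, ← mul_assoc, ← zpow_add₀ (hpQ p)]
      have h20 : 2*n + 2*(-n) = 0 := by ring
      rw [h20, zpow_zero, one_mul]
    obtain ⟨ha1, ha2, ha3⟩ := S_invariant p k D (-n) x h1 h2 h3
    have hva : padicValRat p a = v % 2 := by
      rw [ha, padicValRat.mul (zpow_ne_zero _ (hpQ p)) h2, padicValRat_p_zpow, ← hv]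
      omega
    have hka : ∃ c : ℤ, (k:ℚ) * a = (c:ℚ) := by
      apply int_of_mem_ZOneOver p ha1
      rw [padicValRat.mul hk0 ha2, padicValRat_coprime_nat p hkp, hva]
      omega
    obtain ⟨c, hc⟩ := hka
    have hnorm : ‖(a:ℚ_[p])‖ = (p:ℝ)^(-(v % 2)) := by
      rw [norm_ratCast_eq p ha2, hva]
    have hnormge : (p:ℝ)⁻¹ ≤ ‖(a:ℚ_[p])‖ := by
      rw [hnorm]
      rcases Int.emod_two_eq v with h | h <;> rw [h]
      · norm_num
        exact inv_le_one_of_one_le₀ (hpR1 p).le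
      · norm_num
    have habs : |(a:ℝ)| * ‖(a:ℚ_[p])‖ ≤ D^2 := abs_mul_norm_le p hD.le ha3
    have haD : |(a:ℝ)| ≤ D^2 * p := by
      have h1' : |(a:ℝ)| * (p:ℝ)⁻¹ ≤ D^2 :=
        le_trans (mul_le_mul_of_nonneg_left hnormge (abs_nonneg _)) habs
      calc |(a:ℝ)| = |(a:ℝ)| * (p:ℝ)⁻¹ * p := by
            rw [inv_mul_cancel_right₀ (hpR p).ne']
        _ ≤ D^2 * p := mul_le_mul_of_nonneg_right h1' (hpR p).le
    have hcR : ((k:ℝ)) * (a:ℝ) = (c:ℝ) := by exact_mod_cast hc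
    have hcb : |c| ≤ B := by
      have hcabs : |(c:ℝ)| ≤ (k:ℝ) * p * D^2 := by
        rw [← hcR, abs_mul, abs_of_nonneg (by positivity : (0:ℝ) ≤ (k:ℝ))]
        calc (k:ℝ) * |(a:ℝ)| ≤ (k:ℝ) * (D^2 * p) :=
              mul_le_mul_of_nonneg_left haD (by positivity)
          _ = (k:ℝ) * p * D^2 := by ring
      have : ((|c| : ℤ) : ℝ) ≤ ((B:ℤ) : ℝ) := by
        rw [Int.cast_abs]
        exact le_trans hcabs (Int.le_ceil _)
      exact_mod_cast this
    refine ⟨n, a, ⟨⟨ha1, ha2, ha3⟩, c, hcb, ?_⟩, hxa⟩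
    rw [eq_div_iff hk0, mul_comm]
    exact hc
  · rintro ⟨n, a, ⟨⟨ha1, ha2, ha3⟩, -⟩, rfl⟩
    exact S_invariant p k D n a ha1 ha2 ha3
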